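/- Let n ≥ 2s+1 and 𝒱 be a Sperner family of subspaces of an n-dimensional vector space over F_q, each of dimension at most s. Then |𝒱| ≤ [n choose s]_q, with equality only if 𝒱 consists of all s-dimensional subspaces. -/

import Mathlib

/-- The Gaussian (q-)binomial coefficient. -/
def gaussBinom (q n k : ℕ) : ℚ :=
  ∏ i ∈ Finset.range k, ((q : ℚ) ^ (n - i) - 1) / ((q : ℚ) ^ (k - i) - 1)

namespace SpernerProofAux

open Module Submodule Finset
open scoped Classical

set_option linter.unusedSectionVars false

theorem fiber_count {α β : Type*} [Finite α] [Finite β] (f : α → β) (c : ℕ)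
    (h : ∀ b, Nat.card {a // f a = b} = c) : Nat.card α = Nat.card β * c := by
  letI : Fintype α := Fintype.ofFinite α
  letI : Fintype β := Fintype.ofFinite β
  rw [Nat.card_eq_fintype_card, Nat.card_eq_fintype_card,
    ← Fintype.card_congr (Equiv.sigmaFiberEquiv f), Fintype.card_sigma,
    Finset.sum_congr rfl (fun b _ => by rw [← Nat.card_eq_fintype_card, h b]),
    Finset.sum_const, smul_eq_mul, Fintype.card, mul_comm]

variable {K : Type*} [Field K] [Fintype K]

theorem finiteM (M : Type*) [AddCommGroup M] [Module K M] [FiniteDimensional K M] : Finite M :=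
  Module.finite_of_finite K

theorem finiteSub (M : Type*) [AddCommGroup M] [Module K M] [FiniteDimensional K M] :
    Finite (Submodule K M) := by
  haveI := finiteM (K := K) M
  exact Finite.of_injective (fun W : Submodule K M => (W : Set M)) SetLike.coe_injective

theorem card_ne_zero {M : Type*} [AddCommGroup M] [Module K M] [FiniteDimensional K M] :
    Nat.card {v : M // v ≠ 0} = Fintype.card K ^ (finrank K M) - 1 := by
  haveI := finiteM (K := K) M
  letI : Fintype M := Fintype.ofFinite M
  rw [Nat.card_eq_fintype_card]
  show Fintype.card {v : M // ¬ (v = 0)} = _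
  rw [Fintype.card_subtype_compl, Fintype.card_subtype_eq, card_eq_pow_finrank (K := K)]

theorem card_lines (M : Type*) [AddCommGroup M] [Module K M] [FiniteDimensional K M] :
    Nat.card {L : Submodule K M // finrank K L = 1} * (Fintype.card K - 1)
      = Fintype.card K ^ (finrank K M) - 1 := by
  haveI := finiteM (K := K) M
  haveI := finiteSub (K := K) M
  have key := fiber_count (fun v : {v : M // v ≠ 0} => (⟨K ∙ v.1, finrank_span_singleton (K := K) v.2⟩ : {L : Submodule K M // finrank K L = 1})) (Fintype.card K - 1) ?_
  · rw [← key, card_ne_zero (K := K) (M := M)]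
  · rintro ⟨L, hL⟩
    have hiff : ∀ v : {v : M // v ≠ 0}, (K ∙ v.1) = L ↔ v.1 ∈ L := by
      rintro ⟨v, hv⟩
      constructor
      · rintro rfl; exact Submodule.mem_span_singleton_self v
      · intro hmem
        exact Submodule.eq_of_le_of_finrank_le ((Submodule.span_singleton_le_iff_mem v L).2 hmem)
          (by rw [hL, finrank_span_singleton hv])
    have e : {p : {v : M // v ≠ 0} // (⟨K ∙ p.1, finrank_span_singleton (K := K) p.2⟩ : {L : Submodule K M // finrank K L = 1}) = ⟨L, hL⟩} ≃ {x : L // x ≠ 0} :=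
      { toFun := fun p => ⟨⟨p.1.1, (hiff p.1).1 (Subtype.ext_iff.1 p.2)⟩,
          fun h => p.1.2 (by simpa using Subtype.ext_iff.1 h)⟩
        invFun := fun x => ⟨⟨x.1.1, fun h => x.2 (Subtype.ext h)⟩,
          Subtype.ext ((hiff ⟨x.1.1, fun h => x.2 (Subtype.ext h)⟩).2 x.1.2)⟩
        left_inv := fun p => by ext; rfl
        right_inv := fun x => by ext; rfl }
    haveI : FiniteDimensional K L := FiniteDimensional.finiteDimensional_submodule L
    rw [Nat.card_congr e, card_ne_zero (K := K) (M := L), hL, pow_one]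
theorem card_hyperplanes (M : Type*) [AddCommGroup M] [Module K M] [FiniteDimensional K M] :
    Nat.card {H : Submodule K M // finrank K H + 1 = finrank K M} * (Fintype.card K - 1)
      = Fintype.card K ^ (finrank K M) - 1 := by
  haveI := finiteM (K := K) M
  haveI := finiteSub (K := K) M
  haveI := finiteM (K := K) (Module.Dual K M)
  have hker : ∀ φ : {φ : Module.Dual K M // φ ≠ 0}, finrank K (LinearMap.ker φ.1) + 1 = finrank K M := by
    rintro ⟨φ, hφ⟩
    show finrank K (LinearMap.ker φ) + 1 = finrank K M
    have h1 := LinearMap.finrank_range_add_finrank_ker φ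
    have h2 : finrank K (LinearMap.range φ) = 1 := by
      have hle : finrank K (LinearMap.range φ) ≤ 1 := by
        simpa [finrank_self] using Submodule.finrank_le (LinearMap.range φ)
      have hne : finrank K (LinearMap.range φ) ≠ 0 := by
        intro h0
        exact hφ (LinearMap.range_eq_bot.1 (Submodule.finrank_eq_zero.1 h0))
      omega
    omega
  have key := fiber_count
    (fun φ : {φ : Module.Dual K M // φ ≠ 0} =>
      (⟨LinearMap.ker φ.1, hker φ⟩ : {H : Submodule K M // finrank K H + 1 = finrank K M}))
    (Fintype.card K - 1) ?_
  · rw [← key, card_ne_zero (K := K) (M := Module.Dual K M), Subspace.dual_finrank_eq]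
  · rintro ⟨H, hH⟩
    have hiff : ∀ φ : Module.Dual K M, φ ≠ 0 → (LinearMap.ker φ = H ↔ φ ∈ H.dualAnnihilator) := by
      intro φ hφ
      rw [Submodule.mem_dualAnnihilator]
      constructor
      · rintro rfl; exact fun w hw => hw
      · intro hann
        have hle : H ≤ LinearMap.ker φ := fun x hx => LinearMap.mem_ker.2 (hann x hx)
        have hne : LinearMap.ker φ ≠ ⊤ := fun h => hφ (LinearMap.ker_eq_top.1 h)
        have hlt : finrank K (LinearMap.ker φ) < finrank K M :=
          Submodule.finrank_lt hne
        exact (Submodule.eq_of_le_of_finrank_le hle (by omega)).symm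
    have e : {p : {φ : Module.Dual K M // φ ≠ 0} //
        (⟨LinearMap.ker p.1, hker p⟩ : {H : Submodule K M // finrank K H + 1 = finrank K M}) = ⟨H, hH⟩} ≃
        {x : H.dualAnnihilator // x ≠ 0} :=
      { toFun := fun p => ⟨⟨p.1.1, (hiff p.1.1 p.1.2).1 (Subtype.ext_iff.1 p.2)⟩,
          fun h => p.1.2 (by simpa using Subtype.ext_iff.1 h)⟩
        invFun := fun x => ⟨⟨x.1.1, fun h => x.2 (Subtype.ext h)⟩,
          Subtype.ext ((hiff x.1.1 (fun h => x.2 (Subtype.ext h))).2 x.1.2)⟩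
        left_inv := fun p => by ext : 3; rfl
        right_inv := fun x => by ext : 3; rfl }
    have hann1 : finrank K H.dualAnnihilator = 1 := by
      have h1 : finrank K (M ⧸ H) = finrank K H.dualAnnihilator := (Subspace.quotEquivAnnihilator H).finrank_eq
      have h2 := Submodule.finrank_quotient_add_finrank H
      omega
    haveI : FiniteDimensional K H.dualAnnihilator := inferInstance
    rw [Nat.card_congr e, card_ne_zero (K := K) (M := H.dualAnnihilator), hann1, pow_one]
variable {V : Type*} [AddCommGroup V] [Module K V] [FiniteDimensional K V]

theorem finrank_comap_mkQ (U : Submodule K V) (L : Submodule K (V ⧸ U)) :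
    finrank K (comap U.mkQ L) = finrank K L + finrank K U := by
  set W' : Submodule K V := comap U.mkQ L with hW'
  have hUle : U ≤ W' := by
    intro x hx
    simp only [hW', Submodule.mem_comap, Submodule.mkQ_apply]
    rw [Submodule.Quotient.mk_eq_zero U |>.2 hx]
    exact L.zero_mem
  have f := U.mkQ.comp W'.subtype
  have h1 := LinearMap.finrank_range_add_finrank_ker (U.mkQ.comp W'.subtype)
  rw [LinearMap.range_comp, Submodule.range_subtype, LinearMap.ker_comp, Submodule.ker_mkQ] at h1
  have h2 : map U.mkQ W' = L := by
    rw [hW', Submodule.map_comap_eq, Submodule.range_mkQ, top_inf_eq]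
  have h3 : finrank K (comap W'.subtype U) = finrank K U := by
    rw [← Submodule.finrank_map_subtype_eq, Submodule.map_comap_subtype, inf_eq_right.2 hUle]
  rw [h2, h3] at h1
  exact h1.symm

theorem card_above (U : Submodule K V) (k : ℕ) (hU : finrank K U = k) :
    Nat.card {W : Submodule K V // U ≤ W ∧ finrank K W = k + 1} * (Fintype.card K - 1)
      = Fintype.card K ^ (finrank K V - k) - 1 := by
  have hq : finrank K (V ⧸ U) = finrank K V - k := by
    have := Submodule.finrank_quotient_add_finrank U
    omega
  have e : {L : Submodule K (V ⧸ U) // finrank K L = 1} ≃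
      {W : Submodule K V // U ≤ W ∧ finrank K W = k + 1} :=
    { toFun := fun L => ⟨comap U.mkQ L.1, by
        constructor
        · intro x hx
          simp only [Submodule.mem_comap, Submodule.mkQ_apply]
          rw [Submodule.Quotient.mk_eq_zero U |>.2 hx]
          exact L.1.zero_mem
        · rw [finrank_comap_mkQ, L.2, hU, add_comm]⟩
      invFun := fun W => ⟨map U.mkQ W.1, by
        have hcm : comap U.mkQ (map U.mkQ W.1) = W.1 := by
          rw [Submodule.comap_map_eq, Submodule.ker_mkQ, sup_eq_left.2 W.2.1]
        have := finrank_comap_mkQ U (map U.mkQ W.1)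
        rw [hcm, W.2.2, hU] at this
        omega⟩
      left_inv := fun L => by
        apply Subtype.ext
        dsimp only
        rw [Submodule.map_comap_eq, Submodule.range_mkQ, top_inf_eq]
      right_inv := fun W => by
        apply Subtype.ext
        dsimp only
        rw [Submodule.comap_map_eq, Submodule.ker_mkQ, sup_eq_left.2 W.2.1] }
  rw [← Nat.card_congr e, ← hq]
  exact card_lines (V ⧸ U)

theorem card_below (W : Submodule K V) (k : ℕ) (hW : finrank K W = k + 1) :
    Nat.card {U : Submodule K V // U ≤ W ∧ finrank K U = k} * (Fintype.card K - 1)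
      = Fintype.card K ^ (k + 1) - 1 := by
  have e : {H : Submodule K W // finrank K H + 1 = finrank K W} ≃
      {U : Submodule K V // U ≤ W ∧ finrank K U = k} :=
    { toFun := fun H => ⟨H.1.map W.subtype, ⟨Submodule.map_subtype_le W H.1, by
        have := H.2
        rw [Submodule.finrank_map_subtype_eq]
        omega⟩⟩
      invFun := fun U => ⟨U.1.comap W.subtype, by
        have h3 : finrank K (comap W.subtype U.1) = finrank K U.1 := by
          rw [← Submodule.finrank_map_subtype_eq, Submodule.map_comap_subtype,
            inf_eq_right.2 U.2.1]
        rw [h3, U.2.2, hW]⟩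
      left_inv := fun H => by
        apply Subtype.ext
        dsimp only
        rw [Submodule.comap_map_eq, Submodule.ker_subtype, sup_bot_eq]
      right_inv := fun U => by
        apply Subtype.ext
        dsimp only
        rw [Submodule.map_comap_subtype, inf_eq_right.2 U.2.1] }
  rw [← Nat.card_congr e, ← hW]
  have := card_hyperplanes (K := K) (↥W)
  rw [hW] at this ⊢
  exact this
variable [Fintype (Submodule K V)]

noncomputable def level (k : ℕ) : Finset (Submodule K V) :=
  Finset.univ.filter (fun W => finrank K W = k)

theorem mem_level {k : ℕ} {W : Submodule K V} : W ∈ (level k : Finset (Submodule K V)) ↔ finrank K W = k := by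
  simp [level]

theorem upcount {k : ℕ} {U : Submodule K V} (hU : finrank K U = k) :
    ((level (k+1) : Finset (Submodule K V)).filter (U ≤ ·)).card * (Fintype.card K - 1)
      = Fintype.card K ^ (finrank K V - k) - 1 := by
  rw [← card_above U k hU]
  congr 1
  rw [Nat.card_eq_fintype_card, Fintype.card_subtype]
  congr 1
  ext W
  simp [level, and_comm]

theorem downcount {k : ℕ} {W : Submodule K V} (hW : finrank K W = k + 1) :
    ((level k : Finset (Submodule K V)).filter (· ≤ W)).card * (Fintype.card K - 1)
      = Fintype.card K ^ (k + 1) - 1 := by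
  rw [← card_below W k hW]
  congr 1
  rw [Nat.card_eq_fintype_card, Fintype.card_subtype]
  congr 1
  ext U
  simp [level, and_comm]

theorem level_recurrence (k : ℕ) :
    (level k : Finset (Submodule K V)).card * (Fintype.card K ^ (finrank K V - k) - 1)
      = (level (k+1) : Finset (Submodule K V)).card * (Fintype.card K ^ (k + 1) - 1) := by
  have hdc : ∑ U ∈ (level k : Finset (Submodule K V)), ((level (k+1)).filter (U ≤ ·)).card
      = ∑ W ∈ (level (k+1) : Finset (Submodule K V)), ((level k).filter (· ≤ W)).card := by
    simp only [Finset.card_filter]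
    exact Finset.sum_comm
  have h1 : (∑ U ∈ (level k : Finset (Submodule K V)), ((level (k+1)).filter (U ≤ ·)).card) * (Fintype.card K - 1)
      = (level k : Finset (Submodule K V)).card * (Fintype.card K ^ (finrank K V - k) - 1) := by
    rw [Finset.sum_mul]
    rw [Finset.sum_congr rfl (fun U hU => upcount (mem_level.1 hU))]
    rw [Finset.sum_const, smul_eq_mul]
  have h2 : (∑ W ∈ (level (k+1) : Finset (Submodule K V)), ((level k).filter (· ≤ W)).card) * (Fintype.card K - 1)
      = (level (k+1) : Finset (Submodule K V)).card * (Fintype.card K ^ (k + 1) - 1) := by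
    rw [Finset.sum_mul]
    rw [Finset.sum_congr rfl (fun W hW => downcount (mem_level.1 hW))]
    rw [Finset.sum_const, smul_eq_mul]
  rw [← h1, ← h2, hdc]

theorem level_zero : (level 0 : Finset (Submodule K V)).card = 1 := by
  rw [show (level 0 : Finset (Submodule K V)) = {⊥} from ?_, Finset.card_singleton]
  ext W
  simp only [mem_level, Finset.mem_singleton]
  exact Submodule.finrank_eq_zero

theorem level_prod (k : ℕ) :
    (level k : Finset (Submodule K V)).card * ∏ i ∈ Finset.range k, (Fintype.card K ^ (k - i) - 1)
      = ∏ i ∈ Finset.range k, (Fintype.card K ^ (finrank K V - i) - 1) := by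
  induction k with
  | zero => simp [level_zero]
  | succ k ih =>
    have hsplit : ∏ i ∈ Finset.range (k+1), (Fintype.card K ^ (k + 1 - i) - 1)
        = (∏ i ∈ Finset.range k, (Fintype.card K ^ (k - i) - 1)) * (Fintype.card K ^ (k+1) - 1) := by
      rw [Finset.prod_range_succ']
      simp [Nat.succ_sub_succ]
    rw [hsplit, Finset.prod_range_succ, ← ih]
    rw [show (level (k+1) : Finset (Submodule K V)).card * ((∏ i ∈ Finset.range k, (Fintype.card K ^ (k - i) - 1)) * (Fintype.card K ^ (k+1) - 1)) = ((level (k+1) : Finset (Submodule K V)).card * (Fintype.card K ^ (k+1) - 1)) * ∏ i ∈ Finset.range k, (Fintype.card K ^ (k - i) - 1) by ring]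
    rw [← level_recurrence k]
    ring

theorem shade_strict {k : ℕ} (hk : 2 * k + 2 ≤ finrank K V) (A : Finset (Submodule K V))
    (hA : ∀ U ∈ A, finrank K U = k) (hne : A.Nonempty) :
    A.card < ((level (k+1) : Finset (Submodule K V)).filter (fun W => ∃ U ∈ A, U ≤ W)).card := by
  set q := Fintype.card K with hq
  have hq2 : 2 ≤ q := Fintype.one_lt_card
  set S := ((level (k+1) : Finset (Submodule K V)).filter (fun W => ∃ U ∈ A, U ≤ W)) with hS
  have hdc : ∑ U ∈ A, (S.filter (U ≤ ·)).card = ∑ W ∈ S, (A.filter (· ≤ W)).card := by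
    simp only [Finset.card_filter]; exact Finset.sum_comm
  have key : A.card * (q ^ (finrank K V - k) - 1) ≤ S.card * (q ^ (k+1) - 1) := by
    have h1 : A.card * (q ^ (finrank K V - k) - 1) = (∑ U ∈ A, (S.filter (U ≤ ·)).card) * (q - 1) := by
      rw [Finset.sum_mul, Finset.sum_congr rfl (fun U hU => ?_), Finset.sum_const, smul_eq_mul]
      have hfe : S.filter (U ≤ ·) = (level (k+1) : Finset (Submodule K V)).filter (U ≤ ·) := by
        ext W
        simp only [hS, Finset.mem_filter, and_assoc]
        constructor
        · tauto
        · rintro ⟨h1, h2⟩; exact ⟨h1, ⟨U, hU, h2⟩, h2⟩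
      rw [hfe, upcount (hA U hU)]
    have h2 : (∑ W ∈ S, (A.filter (· ≤ W)).card) * (q - 1) ≤ S.card * (q ^ (k+1) - 1) := by
      rw [Finset.sum_mul]
      calc ∑ W ∈ S, (A.filter (· ≤ W)).card * (q - 1)
          ≤ ∑ W ∈ S, (q ^ (k+1) - 1) := by
            apply Finset.sum_le_sum
            intro W hW
            rw [← downcount (K := K) (V := V) (mem_level.1 (Finset.mem_filter.1 hW).1)]
            apply Nat.mul_le_mul_right
            apply Finset.card_le_card
            intro U hU
            simp only [Finset.mem_filter] at hU ⊢
            exact ⟨mem_level.2 (hA U hU.1), hU.2⟩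
        _ = S.card * (q ^ (k+1) - 1) := by rw [Finset.sum_const, smul_eq_mul]
    rw [h1, hdc]
    exact h2
  by_contra hcon
  push_neg at hcon
  have hlt : q ^ (k+1) - 1 < q ^ (finrank K V - k) - 1 := by
    have : q ^ (k+1) < q ^ (finrank K V - k) :=
      Nat.pow_lt_pow_right hq2 (by omega)
    have h1 : 1 ≤ q ^ (k+1) := Nat.one_le_pow _ _ (by omega)
    omega
  have hA0 : 0 < A.card := Finset.card_pos.2 hne
  have hle : A.card * (q ^ (finrank K V - k) - 1) ≤ A.card * (q ^ (k+1) - 1) :=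
    le_trans key (Nat.mul_le_mul_right _ hcon)
  have hXY := Nat.le_of_mul_le_mul_left hle hA0
  omega
theorem sperner_aux (s : ℕ) (hn : 2 * s + 1 ≤ finrank K V) :
    ∀ t : ℕ, ∀ 𝒱 : Finset (Submodule K V),
      (∀ U ∈ 𝒱, ∀ W ∈ 𝒱, U ≠ W → ¬ U ≤ W) →
      (∀ U ∈ 𝒱, finrank K U ≤ s) →
      (∀ U ∈ 𝒱, s - t ≤ finrank K U) →
      (𝒱.card ≤ (level s : Finset (Submodule K V)).card ∧
        ((∃ U ∈ 𝒱, finrank K U < s) → 𝒱.card < (level s : Finset (Submodule K V)).card)) := by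
  intro t
  induction t with
  | zero =>
    intro 𝒱 hanti hle hge
    have hsub : 𝒱 ⊆ level s := by
      intro U hU
      exact mem_level.2 (le_antisymm (hle U hU) (by simpa using hge U hU))
    refine ⟨Finset.card_le_card hsub, ?_⟩
    rintro ⟨U, hU, hlt⟩
    have := hge U hU
    omega
  | succ t ih =>
    intro 𝒱 hanti hle hge
    by_cases hst : s ≤ t
    · exact ih 𝒱 hanti hle (fun U hU => le_trans (by omega) (hge U hU))
    push_neg at hst
    set j := s - (t + 1) with hj
    have hjs : j < s := by omega
    have hjt : j + 1 = s - t := by omega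
    set A : Finset (Submodule K V) := 𝒱.filter (fun U => finrank K U = j) with hA
    by_cases hAne : A.Nonempty
    · -- replace A by its shade
      set S : Finset (Submodule K V) := ((level (j+1) : Finset (Submodule K V)).filter (fun W => ∃ U ∈ A, U ≤ W)) with hS
      have hAdim : ∀ U ∈ A, finrank K U = j := fun U hU => (Finset.mem_filter.1 hU).2
      have hAsub : A ⊆ 𝒱 := Finset.filter_subset _ _
      have hSdim : ∀ W ∈ S, finrank K W = j + 1 := fun W hW => mem_level.1 (Finset.mem_filter.1 hW).1
      have hScont : ∀ W ∈ S, ∃ U ∈ A, U ≤ W := fun W hW => (Finset.mem_filter.1 hW).2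
      have hVAdim : ∀ X ∈ 𝒱 \ A, j + 1 ≤ finrank K X := by
        intro X hX
        rcases Finset.mem_sdiff.1 hX with ⟨hX1, hX2⟩
        have h1 : j ≤ finrank K X := hge X hX1
        have h2 : finrank K X ≠ j := fun h => hX2 (Finset.mem_filter.2 ⟨hX1, h⟩)
        omega
      have hdisj : Disjoint (𝒱 \ A) S := by
        rw [Finset.disjoint_left]
        intro W hW hWS
        rcases hScont W hWS with ⟨U, hU, hUW⟩
        have hUne : U ≠ W := by
          intro h
          have h1 := hAdim U hU
          have h2 := hSdim W hWS
          rw [h] at h1; omega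
        exact hanti U (hAsub hU) W (Finset.mem_sdiff.1 hW).1 hUne hUW
      set 𝒱' : Finset (Submodule K V) := (𝒱 \ A) ∪ S with h𝒱'
      have hanti' : ∀ X ∈ 𝒱', ∀ Y ∈ 𝒱', X ≠ Y → ¬ X ≤ Y := by
        intro X hX Y hY hne hXY
        rcases Finset.mem_union.1 hX with hX' | hX' <;> rcases Finset.mem_union.1 hY with hY' | hY'
        · exact hanti X (Finset.mem_sdiff.1 hX').1 Y (Finset.mem_sdiff.1 hY').1 hne hXY
        · -- X ∈ 𝒱 \ A, Y ∈ S
          have h1 : j + 1 ≤ finrank K X := hVAdim X hX'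
          have h2 : finrank K Y = j + 1 := hSdim Y hY'
          exact hne (Submodule.eq_of_le_of_finrank_le hXY (by omega))
        · -- X ∈ S, Y ∈ 𝒱 \ A
          rcases hScont X hX' with ⟨U, hU, hUX⟩
          have hUY : U ≤ Y := le_trans hUX hXY
          have hUne : U ≠ Y := by
            intro h
            have h1 := hAdim U hU
            have h2 := hVAdim Y hY'
            rw [h] at h1; omega
          exact hanti U (hAsub hU) Y (Finset.mem_sdiff.1 hY').1 hUne hUY
        · have h1 : finrank K X = j + 1 := hSdim X hX'
          have h2 : finrank K Y = j + 1 := hSdim Y hY'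
          exact hne (Submodule.eq_of_le_of_finrank_le hXY (by omega))
      have hle' : ∀ U ∈ 𝒱', finrank K U ≤ s := by
        intro U hU
        rcases Finset.mem_union.1 hU with h | h
        · exact hle U (Finset.mem_sdiff.1 h).1
        · rw [hSdim U h]; omega
      have hge' : ∀ U ∈ 𝒱', s - t ≤ finrank K U := by
        intro U hU
        rcases Finset.mem_union.1 hU with h | h
        · have := hVAdim U h; omega
        · rw [hSdim U h]; omega
      have hcard : 𝒱.card < 𝒱'.card := by
        rw [h𝒱', Finset.card_union_of_disjoint hdisj, Finset.card_sdiff_of_subset hAsub]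
        have hAcard : A.card ≤ 𝒱.card := Finset.card_le_card hAsub
        have hstrict : A.card < S.card := shade_strict (by omega) A hAdim hAne
        omega
      have := ih 𝒱' hanti' hle' hge'
      constructor
      · omega
      · intro _; omega
    · -- A empty : all dims ≥ j+1 = s - t
      apply ih 𝒱 hanti hle
      intro U hU
      have h1 : j ≤ finrank K U := hge U hU
      have h2 : finrank K U ≠ j := by
        intro h
        exact hAne ⟨U, Finset.mem_filter.2 ⟨hU, h⟩⟩
      omega
end SpernerProofAux

open SpernerProofAux Module Submodule in
theorem sperner_small_dim (q n s : ℕ) (hn : 2 * s + 1 ≤ n)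
    (K : Type*) [Field K] [Fintype K] (hq : Fintype.card K = q)
    (V : Type*) [AddCommGroup V] [Module K V] [FiniteDimensional K V]
    (hdim : Module.finrank K V = n)
    (𝒱 : Finset (Submodule K V))
    (hSperner : ∀ U ∈ 𝒱, ∀ W ∈ 𝒱, U ≠ W → ¬ U ≤ W)
    (hsmall : ∀ U ∈ 𝒱, Module.finrank K U ≤ s) :
    (𝒱.card : ℚ) ≤ gaussBinom q n s ∧
      ((𝒱.card : ℚ) = gaussBinom q n s →
        ∀ U : Submodule K V, U ∈ 𝒱 ↔ Module.finrank K U = s) := by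
  subst hq
  subst hdim
  haveI := finiteSub (K := K) V
  letI : Fintype (Submodule K V) := Fintype.ofFinite _
  have hq2 : 2 ≤ Fintype.card K := Fintype.one_lt_card
  have main := sperner_aux s hn s 𝒱 hSperner hsmall (fun U hU => by omega)
  set Ls := (level s : Finset (Submodule K V)).card with hLsdef
  have hprod := level_prod (K := K) (V := V) s
  have hcast : ∀ (F : ℕ → ℕ) (hF : ∀ i ∈ Finset.range s, F i ≠ 0),
      ((∏ i ∈ Finset.range s, (Fintype.card K ^ F i - 1) : ℕ) : ℚ)
        = ∏ i ∈ Finset.range s, ((Fintype.card K : ℚ) ^ F i - 1) := by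
    intro F hF
    rw [Nat.cast_prod]
    apply Finset.prod_congr rfl
    intro i hi
    have h1 : 1 ≤ Fintype.card K ^ F i := Nat.one_le_pow _ _ (by omega)
    rw [Nat.cast_sub h1, Nat.cast_pow, Nat.cast_one]
  have hQ : (Ls : ℚ) * (∏ i ∈ Finset.range s, ((Fintype.card K : ℚ) ^ (s - i) - 1))
      = ∏ i ∈ Finset.range s, ((Fintype.card K : ℚ) ^ (finrank K V - i) - 1) := by
    rw [← hcast (fun i => s - i) (fun i hi => by simp only [Finset.mem_range] at hi; show s - i ≠ 0; omega),
      ← hcast (fun i => finrank K V - i) (fun i hi => by simp only [Finset.mem_range] at hi; show finrank K V - i ≠ 0; omega),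
      ← Nat.cast_mul, hprod]
  have hDne : (∏ i ∈ Finset.range s, ((Fintype.card K : ℚ) ^ (s - i) - 1)) ≠ 0 := by
    apply Finset.prod_ne_zero_iff.2
    intro i hi
    simp only [Finset.mem_range] at hi
    have : (1 : ℚ) < (Fintype.card K : ℚ) ^ (s - i) := by
      apply one_lt_pow₀
      · exact_mod_cast hq2
      · omega
    intro h0
    rw [sub_eq_zero] at h0
    rw [← h0] at this
    exact lt_irrefl _ this
  have hLs : (Ls : ℚ) = gaussBinom (Fintype.card K) (finrank K V) s := by
    rw [gaussBinom, Finset.prod_div_distrib, eq_div_iff hDne]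
    exact hQ
  constructor
  · rw [← hLs]
    exact_mod_cast main.1
  · intro heq
    have hLseq : 𝒱.card = Ls := by
      have : (𝒱.card : ℚ) = (Ls : ℚ) := heq.trans hLs.symm
      exact_mod_cast this
    have hnolow : ∀ U ∈ 𝒱, finrank K U = s := by
      intro U hU
      by_contra hne
      have hlt : finrank K U < s := lt_of_le_of_ne (hsmall U hU) hne
      have := main.2 ⟨U, hU, hlt⟩
      omega
    have hsub : 𝒱 ⊆ level s := fun U hU => mem_level.2 (hnolow U hU)
    have heqset : 𝒱 = level s := Finset.eq_of_subset_of_card_le hsub (by omega)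
    intro U
    rw [heqset, mem_level]
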